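/- Let n ≥ 5 be odd and consider the vectors of ℤⁿ: v_i = −e_{i−1} + 2e_i − e_{i+1} for 1 ≤ i ≤ n−3 (with e_0 = 0), v_{n−2} = −e_{n−3} + 2e_{n−2} − e_{n−1} − e_n, v_{n−1} = −e_{n−2} + 2e_{n−1}, and v_n = −e_{n−2} + 2e_n. Then the subgroup of ℤⁿ generated by v_1, …, v_n is exactly {(a_1, …, a_n) ∈ ℤⁿ : 2a_1 + 2a_3 + ⋯ + 2a_{n−2} + a_{n−1} − a_n ≡ 0 mod 4} (the first sum running over 2a_i for odd i ≤ n−2). -/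

import Mathlib

/-- The standard basis vectors `e_1, …, e_n` of `ℤⁿ` (indexed `1`-based), with the
convention that `e_j = 0` for `j` outside `{1, …, n}` (in particular `e_0 = e_{n+1} = 0`). -/
def stdE (n j : ℕ) : Fin n → ℤ :=
  if h : 1 ≤ j ∧ j ≤ n then Pi.single (⟨j - 1, by omega⟩ : Fin n) 1 else 0

/-- Type `D_n` vectors: `v_i = -e_{i-1} + 2e_i - e_{i+1}` for `1 ≤ i ≤ n-3`,
`v_{n-2} = -e_{n-3} + 2e_{n-2} - e_{n-1} - e_n`, `v_{n-1} = -e_{n-2} + 2e_{n-1}`,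
and `v_n = -e_{n-2} + 2e_n`. -/
def vD (n i : ℕ) : Fin n → ℤ :=
  if i = n - 2 then -(stdE n (n - 3)) + 2 • stdE n (n - 2) - stdE n (n - 1) - stdE n n
  else if i = n - 1 then -(stdE n (n - 2)) + 2 • stdE n (n - 1)
  else if i = n then -(stdE n (n - 2)) + 2 • stdE n n
  else -(stdE n (i - 1)) + 2 • stdE n i - stdE n (i + 1)

def Fhom (n : ℕ) (h2 : n - 2 < n) (h1 : n - 1 < n) : (Fin n → ℤ) →+ ℤ where
  toFun a := (∑ k ∈ Finset.univ.filter
      (fun k : Fin n => Odd ((k : ℕ) + 1) ∧ (k : ℕ) + 1 ≤ n - 2), 2 * a k)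
      + a ⟨n - 2, h2⟩ - a ⟨n - 1, h1⟩
  map_zero' := by simp
  map_add' a b := by
    simp only [Pi.add_apply, mul_add, Finset.sum_add_distrib]; ring

lemma stdE_zero (n : ℕ) : stdE n 0 = 0 := by
  unfold stdE; rw [dif_neg]; omega

lemma Fhom_single (n : ℕ) (hn : 5 ≤ n) (h2 : n - 2 < n) (h1 : n - 1 < n) (j : ℕ)
    (hj1 : 1 ≤ j) (hjn : j ≤ n) :
    Fhom n h2 h1 (stdE n j) =
      (if Odd j ∧ j ≤ n - 2 then 2 else 0) + (if j = n - 1 then 1 else 0)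
        - (if j = n then 1 else 0) := by
  have hj : 1 ≤ j ∧ j ≤ n := ⟨hj1, hjn⟩
  simp only [Fhom, AddMonoidHom.coe_mk, ZeroHom.coe_mk, stdE, dif_pos hj]
  have e1 : (∑ k ∈ Finset.univ.filter
      (fun k : Fin n => Odd ((k : ℕ) + 1) ∧ (k : ℕ) + 1 ≤ n - 2),
      2 * ((Pi.single (⟨j - 1, by omega⟩ : Fin n) (1:ℤ) : Fin n → ℤ) k))
      = if Odd j ∧ j ≤ n - 2 then 2 else 0 := by
    rw [show (if Odd j ∧ j ≤ n - 2 then (2:ℤ) else 0) =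
      if (⟨j - 1, by omega⟩ : Fin n) ∈ Finset.univ.filter
        (fun k : Fin n => Odd ((k : ℕ) + 1) ∧ (k : ℕ) + 1 ≤ n - 2) then 2 else 0 by
        simp only [Finset.mem_filter, Finset.mem_univ, true_and]
        congr 1
        simp only [eq_iff_iff]
        constructor
        · rintro ⟨h, h'⟩; exact ⟨by simpa [Nat.sub_add_cancel hj1] using h,
            by omega⟩
        · rintro ⟨h, h'⟩; exact ⟨by simpa [Nat.sub_add_cancel hj1] using h, by omega⟩]
    rw [← Finset.sum_ite_eq' _ (⟨j - 1, by omega⟩ : Fin n) (fun _ => (2:ℤ))]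
    apply Finset.sum_congr rfl
    intro k _
    simp [Pi.single_apply, eq_comm]
  have e2 : (Pi.single (⟨j - 1, by omega⟩ : Fin n) (1:ℤ) : Fin n → ℤ) ⟨n - 2, h2⟩
      = if j = n - 1 then 1 else 0 := by
    simp only [Pi.single_apply, Fin.mk.injEq]
    exact if_congr (by omega) rfl rfl
  have e3 : (Pi.single (⟨j - 1, by omega⟩ : Fin n) (1:ℤ) : Fin n → ℤ) ⟨n - 1, h1⟩
      = if j = n then 1 else 0 := by
    simp only [Pi.single_apply, Fin.mk.injEq]
    exact if_congr (by omega) rfl rfl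
  rw [e1, e2, e3]

lemma Fhom_single' (n : ℕ) (hn : 5 ≤ n) (h2 : n - 2 < n) (h1 : n - 1 < n) (j : ℕ)
    (hjn : j ≤ n) :
    Fhom n h2 h1 (stdE n j) =
      (if Odd j ∧ j ≤ n - 2 then 2 else 0) + (if j = n - 1 then 1 else 0)
        - (if j = n then 1 else 0) := by
  rcases Nat.eq_zero_or_pos j with h | h
  · subst h
    rw [stdE_zero, map_zero]
    rw [if_neg (by simp), if_neg (by omega), if_neg (by omega)]
    ring
  · exact Fhom_single n hn h2 h1 j h hjn

theorem stmt_15 (n : ℕ) (hn : 5 ≤ n) (hodd : Odd n) :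
    ∀ a : Fin n → ℤ,
      a ∈ AddSubgroup.closure (vD n '' Set.Icc 1 n) ↔
        (4 : ℤ) ∣
          ((∑ k ∈ Finset.univ.filter
              (fun k : Fin n => Odd ((k : ℕ) + 1) ∧ (k : ℕ) + 1 ≤ n - 2), 2 * a k)
            + a ⟨n - 2, by omega⟩ - a ⟨n - 1, by omega⟩) := by
  obtain ⟨k, hk⟩ := hodd
  have h2 : n - 2 < n := by omega
  have h1 : n - 1 < n := by omega
  set G := AddSubgroup.closure (vD n '' Set.Icc 1 n) with hG
  intro a
  have hFa : ((∑ k ∈ Finset.univ.filter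
      (fun k : Fin n => Odd ((k : ℕ) + 1) ∧ (k : ℕ) + 1 ≤ n - 2), 2 * a k)
      + a ⟨n - 2, by omega⟩ - a ⟨n - 1, by omega⟩) = Fhom n h2 h1 a := rfl
  rw [hFa]
  constructor
  · -- forward direction
    intro ha
    have hle : G ≤ AddSubgroup.comap (Fhom n h2 h1) (AddSubgroup.zmultiples (4:ℤ)) := by
      rw [hG]
      rw [AddSubgroup.closure_le]
      rintro x ⟨i, hi, rfl⟩
      simp only [Set.mem_Icc] at hi
      simp only [SetLike.mem_coe, AddSubgroup.mem_comap, Int.mem_zmultiples_iff]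
      unfold vD
      by_cases e2 : i = n - 2
      · rw [if_pos e2]
        rw [map_sub, map_sub, map_add, map_neg, AddMonoidHom.map_nsmul]
        rw [Fhom_single' n hn h2 h1 (n-3) (by omega), Fhom_single' n hn h2 h1 (n-2) (by omega),
            Fhom_single' n hn h2 h1 (n-1) (by omega), Fhom_single' n hn h2 h1 n (by omega)]
        simp only [Nat.odd_iff, nsmul_eq_mul]
        rw [if_neg (show ¬((n-3)%2 = 1 ∧ n-3 ≤ n-2) from by omega),
            if_neg (show ¬(n-3 = n-1) from by omega), if_neg (show ¬(n-3 = n) from by omega),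
            if_pos (show (n-2)%2 = 1 ∧ n-2 ≤ n-2 from by omega),
            if_neg (show ¬(n-2 = n-1) from by omega), if_neg (show ¬(n-2 = n) from by omega),
            if_neg (show ¬((n-1)%2 = 1 ∧ n-1 ≤ n-2) from by omega),
            if_neg (show ¬(n-1 = n) from by omega),
            if_neg (show ¬(n%2 = 1 ∧ n ≤ n-2) from by omega),
            if_neg (show ¬(n = n-1) from by omega)]
        norm_num
      · rw [if_neg e2]
        by_cases e1 : i = n - 1
        · rw [if_pos e1]
          rw [map_add, map_neg, AddMonoidHom.map_nsmul]
          rw [Fhom_single' n hn h2 h1 (n-2) (by omega), Fhom_single' n hn h2 h1 (n-1) (by omega)]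
          simp only [Nat.odd_iff, nsmul_eq_mul]
          rw [if_pos (show (n-2)%2 = 1 ∧ n-2 ≤ n-2 from by omega),
              if_neg (show ¬(n-2 = n-1) from by omega), if_neg (show ¬(n-2 = n) from by omega),
              if_neg (show ¬((n-1)%2 = 1 ∧ n-1 ≤ n-2) from by omega),
              if_neg (show ¬(n-1 = n) from by omega)]
          norm_num
        · rw [if_neg e1]
          by_cases e0 : i = n
          · rw [if_pos e0]
            rw [map_add, map_neg, AddMonoidHom.map_nsmul]
            rw [Fhom_single' n hn h2 h1 (n-2) (by omega), Fhom_single' n hn h2 h1 n (by omega)]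
            simp only [Nat.odd_iff, nsmul_eq_mul]
            rw [if_pos (show (n-2)%2 = 1 ∧ n-2 ≤ n-2 from by omega),
                if_neg (show ¬(n-2 = n-1) from by omega), if_neg (show ¬(n-2 = n) from by omega),
                if_neg (show ¬(n%2 = 1 ∧ n ≤ n-2) from by omega),
                if_neg (show ¬(n = n-1) from by omega)]
            norm_num
          · -- 1 ≤ i ≤ n - 3
            have hi3 : 1 ≤ i ∧ i ≤ n - 3 := by omega
            rw [if_neg e0]
            rw [map_sub, map_add, map_neg, AddMonoidHom.map_nsmul]
            rw [Fhom_single' n hn h2 h1 (i-1) (by omega), Fhom_single' n hn h2 h1 i (by omega),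
                Fhom_single' n hn h2 h1 (i+1) (by omega)]
            simp only [Nat.odd_iff, nsmul_eq_mul]
            rw [if_neg (show ¬(i-1 = n-1) from by omega), if_neg (show ¬(i-1 = n) from by omega),
                if_neg (show ¬(i = n-1) from by omega), if_neg (show ¬(i = n) from by omega),
                if_neg (show ¬(i+1 = n-1) from by omega), if_neg (show ¬(i+1 = n) from by omega)]
            rcases Nat.even_or_odd i with he | ho
            · rw [Nat.even_iff] at he
              rw [if_pos (show (i-1)%2 = 1 ∧ i-1 ≤ n-2 from by omega),
                  if_neg (show ¬(i%2 = 1 ∧ i ≤ n-2) from by omega),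
                  if_pos (show (i+1)%2 = 1 ∧ i+1 ≤ n-2 from by omega)]
              norm_num
            · rw [Nat.odd_iff] at ho
              rw [if_neg (show ¬((i-1)%2 = 1 ∧ i-1 ≤ n-2) from by omega),
                  if_pos (show i%2 = 1 ∧ i ≤ n-2 from by omega),
                  if_neg (show ¬((i+1)%2 = 1 ∧ i+1 ≤ n-2) from by omega)]
              norm_num
    have := hle ha
    simpa only [AddSubgroup.mem_comap, Int.mem_zmultiples_iff] using this
  · -- backward direction
    intro hdvd
    have hmem : ∀ i, 1 ≤ i → i ≤ n → vD n i ∈ G := fun i hi1 hi2 =>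
      AddSubgroup.subset_closure ⟨i, Set.mem_Icc.2 ⟨hi1, hi2⟩, rfl⟩
    have hvlow : ∀ i, 1 ≤ i → i ≤ n - 3 →
        vD n i = -(stdE n (i - 1)) + 2 • stdE n i - stdE n (i + 1) := by
      intro i hi1 hi3
      unfold vD
      rw [if_neg (by omega), if_neg (by omega), if_neg (by omega)]
    have hT : ∀ m, 1 ≤ m → m ≤ n - 3 →
        stdE n 1 + stdE n m - stdE n (m + 1) ∈ G := by
      intro m hm1
      induction m, hm1 using Nat.le_induction with
      | base =>
        intro _
        have h := hmem 1 le_rfl (by omega)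
        rw [hvlow 1 le_rfl (by omega)] at h
        have e : -(stdE n (1 - 1)) + 2 • stdE n 1 - stdE n (1 + 1) =
            stdE n 1 + stdE n 1 - stdE n (1 + 1) := by
          rw [show (1:ℕ) - 1 = 0 from rfl, stdE_zero]
          abel
        rwa [e] at h
      | succ m hm ih =>
        intro h3
        have ihm := ih (by omega)
        have h := hmem (m + 1) (by omega) (by omega)
        rw [hvlow (m + 1) (by omega) h3] at h
        have hsum := AddSubgroup.add_mem G ihm h
        have e : stdE n 1 + stdE n m - stdE n (m + 1) +
            (-(stdE n (m + 1 - 1)) + 2 • stdE n (m + 1) - stdE n (m + 1 + 1)) =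
            stdE n 1 + stdE n (m + 1) - stdE n (m + 1 + 1) := by
          rw [Nat.add_sub_cancel]
          abel
        rwa [e] at hsum
    have hU : stdE n 1 + stdE n (n - 2) - stdE n (n - 1) - stdE n n ∈ G := by
      have ha1 := hT (n - 3) (by omega) le_rfl
      have ha2 := hmem (n - 2) (by omega) (by omega)
      rw [show vD n (n - 2) =
        -(stdE n (n - 3)) + 2 • stdE n (n - 2) - stdE n (n - 1) - stdE n n
        from by unfold vD; rw [if_pos rfl]] at ha2
      have h := AddSubgroup.add_mem G ha1 ha2
      have e : stdE n 1 + stdE n (n - 3) - stdE n (n - 3 + 1) +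
          (-(stdE n (n - 3)) + 2 • stdE n (n - 2) - stdE n (n - 1) - stdE n n)
          = stdE n 1 + stdE n (n - 2) - stdE n (n - 1) - stdE n n := by
        rw [show n - 3 + 1 = n - 2 from by omega]; abel
      rwa [e] at h
    have hW : stdE n 1 + stdE n (n - 1) - stdE n n ∈ G := by
      have ha2 := hmem (n - 1) (by omega) (by omega)
      rw [show vD n (n - 1) = -(stdE n (n - 2)) + 2 • stdE n (n - 1)
        from by unfold vD; rw [if_neg (by omega), if_pos rfl]] at ha2
      have h := AddSubgroup.add_mem G hU ha2
      have e : stdE n 1 + stdE n (n - 2) - stdE n (n - 1) - stdE n n +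
          (-(stdE n (n - 2)) + 2 • stdE n (n - 1))
          = stdE n 1 + stdE n (n - 1) - stdE n n := by abel
      rwa [e] at h
    have hX : stdE n 1 - stdE n (n - 1) + stdE n n ∈ G := by
      have ha2 := hmem n (by omega) le_rfl
      rw [show vD n n = -(stdE n (n - 2)) + 2 • stdE n n
        from by unfold vD; rw [if_neg (by omega), if_neg (by omega), if_pos rfl]] at ha2
      have h := AddSubgroup.add_mem G hU ha2
      have e : stdE n 1 + stdE n (n - 2) - stdE n (n - 1) - stdE n n +
          (-(stdE n (n - 2)) + 2 • stdE n n)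
          = stdE n 1 - stdE n (n - 1) + stdE n n := by abel
      rwa [e] at h
    have h2e1 : stdE n 1 + stdE n 1 ∈ G := by
      have h := AddSubgroup.add_mem G hW hX
      have e : stdE n 1 + stdE n (n - 1) - stdE n n +
          (stdE n 1 - stdE n (n - 1) + stdE n n) = stdE n 1 + stdE n 1 := by abel
      rwa [e] at h
    have hA : ∀ m, 1 ≤ m → m ≤ n - 2 →
        stdE n m - (m : ℤ) • stdE n 1 ∈ G := by
      intro m hm1
      induction m, hm1 using Nat.le_induction with
      | base =>
        intro _
        have e : stdE n 1 - ((1 : ℕ) : ℤ) • stdE n 1 = 0 := by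
          push_cast
          rw [one_smul, sub_self]
        rw [e]
        exact zero_mem G
      | succ m hm ih =>
        intro hm2
        have ihm := ih (by omega)
        have hTm := hT m hm (by omega)
        have h := AddSubgroup.sub_mem G ihm hTm
        have e : stdE n m - ((m : ℕ) : ℤ) • stdE n 1 -
            (stdE n 1 + stdE n m - stdE n (m + 1)) =
            stdE n (m + 1) - (((m + 1 : ℕ)) : ℤ) • stdE n 1 := by
          push_cast
          rw [add_smul, one_smul]
          abel
        rwa [e] at h
    have hC : stdE n (n - 1) + stdE n n ∈ G := by
      have h := AddSubgroup.add_mem G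
        (AddSubgroup.add_mem G (hA (n - 2) (by omega) le_rfl)
          (AddSubgroup.zsmul_mem G h2e1 (k : ℤ)))
        (AddSubgroup.neg_mem G hU)
      have hc : (((n - 2 : ℕ)) : ℤ) = 2 * (k : ℤ) - 1 := by omega
      have e : stdE n (n - 2) - (((n - 2 : ℕ)) : ℤ) • stdE n 1 +
          (k : ℤ) • (stdE n 1 + stdE n 1) +
          -(stdE n 1 + stdE n (n - 2) - stdE n (n - 1) - stdE n n)
          = stdE n (n - 1) + stdE n n := by
        rw [hc]
        module
      rwa [e] at h
    have hD : stdE n 1 - (2 : ℤ) • stdE n n ∈ G := by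
      have h := AddSubgroup.sub_mem G hW hC
      have e : stdE n 1 + stdE n (n - 1) - stdE n n - (stdE n (n - 1) + stdE n n)
          = stdE n 1 - (2 : ℤ) • stdE n n := by module
      rwa [e] at h
    have h4 : (4 : ℤ) • stdE n n ∈ G := by
      have h := AddSubgroup.sub_mem G h2e1 (AddSubgroup.zsmul_mem G hD 2)
      have e : stdE n 1 + stdE n 1 - (2 : ℤ) • (stdE n 1 - (2 : ℤ) • stdE n n)
          = (4 : ℤ) • stdE n n := by module
      rwa [e] at h
    have hu : ∀ j, 1 ≤ j → j ≤ n →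
        stdE n j - (if j = n then 1 else if j = n - 1 then -1
          else if j % 2 = 1 then 2 else 0 : ℤ) • stdE n n ∈ G := by
      intro j hj1 hjn
      by_cases hjn' : j = n
      · rw [if_pos hjn', hjn', one_smul, sub_self]
        exact zero_mem G
      · rw [if_neg hjn']
        by_cases hn1 : j = n - 1
        · rw [if_pos hn1, hn1, neg_one_zsmul, sub_neg_eq_add]
          exact hC
        · rw [if_neg hn1]
          have hj2 : j ≤ n - 2 := by omega
          by_cases hpar : j % 2 = 1
          · rw [if_pos hpar]
            obtain ⟨t, ht⟩ : ∃ t, j = 2 * t + 1 := ⟨j / 2, by omega⟩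
            have h := AddSubgroup.add_mem G
              (AddSubgroup.add_mem G (hA j hj1 hj2)
                (AddSubgroup.zsmul_mem G h2e1 (t : ℤ))) hD
            have e : stdE n j - ((j : ℕ) : ℤ) • stdE n 1 +
                (t : ℤ) • (stdE n 1 + stdE n 1) +
                (stdE n 1 - (2 : ℤ) • stdE n n)
                = stdE n j - (2 : ℤ) • stdE n n := by
              have hc : ((j : ℕ) : ℤ) = 2 * (t : ℤ) + 1 := by omega
              rw [hc]; module
            rwa [e] at h
          · rw [if_neg hpar]
            obtain ⟨t, ht⟩ : ∃ t, j = 2 * t := ⟨j / 2, by omega⟩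
            have h := AddSubgroup.add_mem G (hA j hj1 hj2)
              (AddSubgroup.zsmul_mem G h2e1 (t : ℤ))
            have e : stdE n j - ((j : ℕ) : ℤ) • stdE n 1 +
                (t : ℤ) • (stdE n 1 + stdE n 1)
                = stdE n j - (0 : ℤ) • stdE n n := by
              have hc : ((j : ℕ) : ℤ) = 2 * (t : ℤ) := by omega
              rw [hc]; module
            rwa [e] at h
    have hsingle : ∀ i : Fin n, stdE n ((i : ℕ) + 1) = Pi.single i (1 : ℤ) := by
      intro i
      have hi := i.isLt
      unfold stdE
      rw [dif_pos ⟨by omega, by omega⟩]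
      congr 1
    have key : a = (∑ i : Fin n, a i • (stdE n ((i : ℕ) + 1) -
        (if (i : ℕ) + 1 = n then 1 else if (i : ℕ) + 1 = n - 1 then -1
          else if ((i : ℕ) + 1) % 2 = 1 then 2 else 0 : ℤ) • stdE n n)) +
        (∑ i : Fin n, a i * (if (i : ℕ) + 1 = n then 1 else if (i : ℕ) + 1 = n - 1 then -1
          else if ((i : ℕ) + 1) % 2 = 1 then 2 else 0 : ℤ)) • stdE n n := by
      have hterm : ∀ i : Fin n, a i • (stdE n ((i : ℕ) + 1) -
          (if (i : ℕ) + 1 = n then 1 else if (i : ℕ) + 1 = n - 1 then -1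
            else if ((i : ℕ) + 1) % 2 = 1 then 2 else 0 : ℤ) • stdE n n)
          = Pi.single i (a i) - (a i * (if (i : ℕ) + 1 = n then 1
            else if (i : ℕ) + 1 = n - 1 then -1
            else if ((i : ℕ) + 1) % 2 = 1 then 2 else 0 : ℤ)) • stdE n n := by
        intro i
        rw [hsingle i, smul_sub, smul_smul, ← Pi.single_smul, smul_eq_mul, mul_one]
      rw [Finset.sum_congr rfl (fun i _ => hterm i), Finset.sum_sub_distrib,
        Finset.univ_sum_single, ← Finset.sum_smul]
      abel
    have hgam : (4 : ℤ) ∣ (∑ i : Fin n, a i * (if (i : ℕ) + 1 = n then 1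
        else if (i : ℕ) + 1 = n - 1 then -1
        else if ((i : ℕ) + 1) % 2 = 1 then 2 else 0 : ℤ)) := by
      have hterm : ∀ i : Fin n, a i * (if (i : ℕ) + 1 = n then 1
          else if (i : ℕ) + 1 = n - 1 then -1
          else if ((i : ℕ) + 1) % 2 = 1 then 2 else 0 : ℤ)
          = (if Odd ((i : ℕ) + 1) ∧ (i : ℕ) + 1 ≤ n - 2 then 2 * a i else 0) +
            ((if i = (⟨n - 2, h2⟩ : Fin n) then -a i else 0) +
             (if i = (⟨n - 1, h1⟩ : Fin n) then a i else 0)) := by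
        intro i
        have hi := i.isLt
        have hv2 : (i = (⟨n - 2, h2⟩ : Fin n)) ↔ ((i : ℕ) = n - 2) := by
          rw [Fin.ext_iff]
        have hv1 : (i = (⟨n - 1, h1⟩ : Fin n)) ↔ ((i : ℕ) = n - 1) := by
          rw [Fin.ext_iff]
        simp only [hv2, hv1, Nat.odd_iff]
        split_ifs <;> omega
      rw [Finset.sum_congr rfl (fun i _ => hterm i), Finset.sum_add_distrib,
        Finset.sum_add_distrib, Finset.sum_ite_eq' Finset.univ (⟨n - 2, h2⟩ : Fin n)
          (fun j => -a j),
        Finset.sum_ite_eq' Finset.univ (⟨n - 1, h1⟩ : Fin n) (fun j => a j),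
        ← Finset.sum_filter]
      simp only [Finset.mem_univ, if_true]
      have hS : Fhom n h2 h1 a = (∑ k ∈ Finset.univ.filter
          (fun k : Fin n => Odd ((k : ℕ) + 1) ∧ (k : ℕ) + 1 ≤ n - 2), 2 * a k)
          + a ⟨n - 2, h2⟩ - a ⟨n - 1, h1⟩ := rfl
      rw [hS] at hdvd
      rw [show (∑ k ∈ Finset.univ.filter
          (fun k : Fin n => Odd ((k : ℕ) + 1) ∧ (k : ℕ) + 1 ≤ n - 2), 2 * a k)
          = 2 * (∑ k ∈ Finset.univ.filter
          (fun k : Fin n => Odd ((k : ℕ) + 1) ∧ (k : ℕ) + 1 ≤ n - 2), a k)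
          from (Finset.mul_sum _ _ _).symm] at hdvd ⊢
      omega
    rw [key]
    refine AddSubgroup.add_mem G
      (AddSubgroup.sum_mem G (fun i _ =>
        AddSubgroup.zsmul_mem G (hu ((i : ℕ) + 1) (by omega) i.isLt) (a i))) ?_
    obtain ⟨d, hd⟩ := hgam
    rw [hd, mul_comm, mul_smul]
    exact AddSubgroup.zsmul_mem G h4 d
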